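/- Let Ω* be the collection consisting of all clusters together with all CKCs not contained in any cluster. Then Ω* is a partition of Ω, and for any two distinct elements A₁, A₂ of Ω* there is at most one block B of F₁ with B ∩ A₁ ≠ ∅ and B ∩ A₂ ≠ ∅. -/

import Mathlib

open scoped Classical

namespace Oracles

variable {Ω : Type}

/-- Two states lie in the same common knowledge component (CKC) iff they are related
by the join (finest common coarsening) of the players' information partitions. -/
def ckcRel {n : ℕ} (Pl : Fin n → Setoid Ω) (ω ω' : Ω) : Prop :=
  (⨆ i, Pl i).r ω ω'

/-- An `F`-loop: a cyclic sequence of `m ≥ 2` pairs of states `(x j, y j)`. -/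
structure IsLoop {n : ℕ} (Pl : Fin n → Setoid Ω) (F : Setoid Ω)
    (m : ℕ) (x y : ZMod m → Ω) : Prop where
  two_le : 2 ≤ m
  pair_ne : ∀ j, x j ≠ y j
  pair_ckc : ∀ j, ckcRel Pl (x j) (y j)
  link : ∀ j, F.r (y j) (x (j + 1))
  ckc_ne : ∀ j, ¬ ckcRel Pl (x j) (x (j + 1))
  link_disjoint : ∀ j k : ZMod m, j ≠ k →
    ({y j, x (j + 1)} : Set Ω) ∩ {y k, x (k + 1)} = ∅

/-- The set of states of a loop. -/
def loopStates {m : ℕ} (x y : ZMod m → Ω) : Set Ω :=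
  Set.range x ∪ Set.range y

/-- `F` refines `F'` in every CKC. -/
def RefinesInCKC {n : ℕ} (Pl : Fin n → Setoid Ω) (F F' : Setoid Ω) : Prop :=
  ∀ ω ω', ckcRel Pl ω ω' → F.r ω ω' → F'.r ω ω'

/-- A loop is `F'`-non-informative if both states of each of its pairs lie in the
same block of `F'`. -/
def NonInformative (F' : Setoid Ω) {m : ℕ} (x y : ZMod m → Ω) : Prop :=
  ∀ j, F'.r (x j) (y j)

/-- A loop is `F'`-fully-informative if the states of each pair lie in different
blocks of `F'`. -/
def FullyInformative (F' : Setoid Ω) {m : ℕ} (x y : ZMod m → Ω) : Prop :=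
  ∀ j, ¬ F'.r (x j) (y j)

/-- A loop is `F'`-informative if the states of at least one pair lie in different
blocks of `F'`. -/
def Informative (F' : Setoid Ω) {m : ℕ} (x y : ZMod m → Ω) : Prop :=
  ∃ j, ¬ F'.r (x j) (y j)

/-- A loop is irreducible if no strict subset of its set of states forms an `F`-loop. -/
def IsIrreducible {n : ℕ} (Pl : Fin n → Setoid Ω) (F : Setoid Ω)
    {m : ℕ} (x y : ZMod m → Ω) : Prop :=
  ¬ ∃ (m' : ℕ) (x' y' : ZMod m' → Ω),
      IsLoop Pl F m' x' y' ∧ loopStates x' y' ⊂ loopStates x y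

/-- A loop is type-2 irreducible if no four distinct states of the loop lie in the
same block of `F`. -/
def Type2Irreducible (F : Setoid Ω) {m : ℕ} (x y : ZMod m → Ω) : Prop :=
  ¬ ∃ a b c d : Ω,
      a ∈ loopStates x y ∧ b ∈ loopStates x y ∧ c ∈ loopStates x y ∧
        d ∈ loopStates x y ∧
      a ≠ b ∧ a ≠ c ∧ a ≠ d ∧ b ≠ c ∧ b ≠ d ∧ c ≠ d ∧
      F.r a b ∧ F.r a c ∧ F.r a d

/-- A loop is `F'`-balanced if for every partition of its set of states into two
disjoint `F'`-measurable sets `A` and `B`, the number of transitions from `A` to `B`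
equals the number of transitions from `B` to `A`. -/
def Balanced (F' : Setoid Ω) {m : ℕ} (x y : ZMod m → Ω) : Prop :=
  ∀ A B : Set Ω,
    A ∪ B = loopStates x y → A ∩ B = ∅ →
    (∀ ω ω', ω ∈ loopStates x y → ω' ∈ loopStates x y → F'.r ω ω' →
      (ω ∈ A ↔ ω' ∈ A)) →
    Nat.card {j : ZMod m // x j ∈ A ∧ y j ∈ B} =
      Nat.card {j : ZMod m // x j ∈ B ∧ y j ∈ A}

/-- A loop is `F'`-covered if its index set can be partitioned into the set
`J = {j : x j ∈ F'(y j)}` together with classes each of which, arranged in a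
suitable cyclic order, forms an `F'`-loop. -/
def Covered {n : ℕ} (Pl : Fin n → Setoid Ω) (F' : Setoid Ω)
    {m : ℕ} (x y : ZMod m → Ω) : Prop :=
  ∃ (r : ℕ) (I : Fin r → Set (ZMod m)),
    (Pairwise fun t t' => Disjoint (I t) (I t')) ∧
    (⋃ t, I t) = {j | ¬ F'.r (x j) (y j)} ∧
    ∀ t, ∃ (mt : ℕ) (e : ZMod mt → ZMod m),
      Function.Injective e ∧ Set.range e = I t ∧
      IsLoop Pl F' mt (x ∘ e) (y ∘ e)


/-- A bundled `F`-loop. -/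
structure Loop {n : ℕ} (Pl : Fin n → Setoid Ω) (F : Setoid Ω) where
  m : ℕ
  x : ZMod m → Ω
  y : ZMod m → Ω
  isLoop : IsLoop Pl F m x y

/-- Two loops share a CKC if some CKC contains a pair of each of them. -/
def ShareCKC {n : ℕ} {Pl : Fin n → Setoid Ω} {F : Setoid Ω}
    (L L' : Loop Pl F) : Prop :=
  ∃ j j', ckcRel Pl (L.x j) (L'.x j')

/-- A connected family of type-2 irreducible loops: any two of its members are
joined by a finite chain of members, consecutive ones sharing a CKC. -/
def IsConnectedFamily {n : ℕ} {Pl : Fin n → Setoid Ω} {F : Setoid Ω}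
    (𝒜 : Set (Loop Pl F)) : Prop :=
  (∀ L ∈ 𝒜, Type2Irreducible F L.x L.y) ∧
  ∀ L ∈ 𝒜, ∀ L' ∈ 𝒜,
    Relation.ReflTransGen (fun a b => a ∈ 𝒜 ∧ b ∈ 𝒜 ∧ ShareCKC a b) L L'

/-- A maximal (nonempty) connected family of type-2 irreducible loops. -/
def IsMaximalConnectedFamily {n : ℕ} {Pl : Fin n → Setoid Ω} {F : Setoid Ω}
    (𝒜 : Set (Loop Pl F)) : Prop :=
  𝒜.Nonempty ∧ IsConnectedFamily 𝒜 ∧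
    ∀ ℬ : Set (Loop Pl F), IsConnectedFamily ℬ → 𝒜 ⊆ ℬ → ℬ = 𝒜

/-- The union of all CKCs that contain a pair of some loop of the family. -/
def clusterOf {n : ℕ} {Pl : Fin n → Setoid Ω} {F : Setoid Ω}
    (𝒜 : Set (Loop Pl F)) : Set Ω :=
  {ω | ∃ L ∈ 𝒜, ∃ j, ckcRel Pl ω (L.x j)}

/-- A cluster: the union of all CKCs containing a pair of some loop of a maximal
connected family of type-2 irreducible loops. -/
def IsCluster {n : ℕ} (Pl : Fin n → Setoid Ω) (F : Setoid Ω) (C : Set Ω) : Prop :=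
  ∃ 𝒜 : Set (Loop Pl F), IsMaximalConnectedFamily 𝒜 ∧ C = clusterOf 𝒜

/-- `Ω*`: the collection of all clusters together with all CKCs not contained in
any cluster. -/
def OmegaStar {n : ℕ} (Pl : Fin n → Setoid Ω) (F : Setoid Ω) : Set (Set Ω) :=
  {C | IsCluster Pl F C} ∪
    {C | (∃ ω, C = {ω' | ckcRel Pl ω ω'}) ∧ ∀ D, IsCluster Pl F D → ¬ C ⊆ D}

section Aux
variable {n : ℕ} {Pl : Fin n → Setoid Ω} {F₁ : Setoid Ω}

lemma kre (ω : Ω) : ckcRel Pl ω ω := (⨆ i, Pl i).iseqv.refl ω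
lemma ksy {a b : Ω} (h : ckcRel Pl a b) : ckcRel Pl b a := (⨆ i, Pl i).iseqv.symm h
lemma ktr {a b c : Ω} (h : ckcRel Pl a b) (h' : ckcRel Pl b c) : ckcRel Pl a c :=
  (⨆ i, Pl i).iseqv.trans h h'
lemma fre (ω : Ω) : F₁.r ω ω := F₁.iseqv.refl ω
lemma fsy {a b : Ω} (h : F₁.r a b) : F₁.r b a := F₁.iseqv.symm h
lemma ftr {a b c : Ω} (h : F₁.r a b) (h' : F₁.r b c) : F₁.r a c := F₁.iseqv.trans h h'

def StepIn (Pl : Fin n → Setoid Ω) (F₁ : Setoid Ω) (A : Set Ω) (u v : Ω) : Prop :=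
  u ∈ A ∧ v ∈ A ∧ (ckcRel Pl u v ∨ F₁.r u v)

def IsHW (Pl : Fin n → Setoid Ω) (F₁ : Setoid Ω) (A : Set Ω)
    (p q : Ω) (k : ℕ) (U V : ℕ → Ω) : Prop :=
  (∀ t, t < k → U t ∈ A) ∧ (∀ t, t < k → V t ∈ A) ∧
  (∀ t, t < k → ckcRel Pl (U t) (V t)) ∧ (∀ t, t < k → ¬ F₁.r (U t) (V t)) ∧
  (∀ t, t + 1 < k → F₁.r (V t) (U (t + 1))) ∧
  (k = 0 → F₁.r p q) ∧ (0 < k → F₁.r p (U 0)) ∧ (0 < k → F₁.r (V (k - 1)) q)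

def hwR (p : Ω) (V : ℕ → Ω) : ℕ → Ω := fun t => if t = 0 then p else V (t - 1)

lemma hwR_zero (p : Ω) (V : ℕ → Ω) : hwR p V 0 = p := rfl
lemma hwR_succ (p : Ω) (V : ℕ → Ω) {t : ℕ} (h : t ≠ 0) : hwR p V t = V (t - 1) := if_neg h

lemma hw_transport_left {A : Set Ω} {p p' q : Ω} {k U V}
    (hF : F₁.r p' p) (h : IsHW Pl F₁ A p q k U V) : IsHW Pl F₁ A p' q k U V := by
  obtain ⟨h1, h2, h3, h4, h5, h6, h7, h8⟩ := h
  exact ⟨h1, h2, h3, h4, h5, fun hk => ftr hF (h6 hk), fun hk => ftr hF (h7 hk), h8⟩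

lemma hw_transport_right {A : Set Ω} {p q q' : Ω} {k U V}
    (hF : F₁.r q q') (h : IsHW Pl F₁ A p q k U V) : IsHW Pl F₁ A p q' k U V := by
  obtain ⟨h1, h2, h3, h4, h5, h6, h7, h8⟩ := h
  exact ⟨h1, h2, h3, h4, h5, fun hk => ftr (h6 hk) hF, h7, fun hk => ftr (h8 hk) hF⟩

lemma hw_prefix {A : Set Ω} {p q : Ω} {k U V} (h : IsHW Pl F₁ A p q k U V)
    {s : ℕ} (hs : s ≤ k) : IsHW Pl F₁ A p (hwR p V s) s U V := by
  obtain ⟨h1, h2, h3, h4, h5, h6, h7, h8⟩ := h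
  refine ⟨?_, ?_, ?_, ?_, ?_, ?_, ?_, ?_⟩
  · intro t ht; exact h1 t (by omega)
  · intro t ht; exact h2 t (by omega)
  · intro t ht; exact h3 t (by omega)
  · intro t ht; exact h4 t (by omega)
  · intro t ht; exact h5 t (by omega)
  · rintro rfl; exact fre p
  · intro hk; exact h7 (by omega)
  · intro hk; rw [hwR_succ _ _ (by omega : s ≠ 0)]; try exact fre _

lemma hw_suffix {A : Set Ω} {p q : Ω} {k U V} (h : IsHW Pl F₁ A p q k U V)
    {s : ℕ} (hs : s ≤ k) :
    IsHW Pl F₁ A (hwR p V s) q (k - s) (fun t => U (t + s)) (fun t => V (t + s)) := by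
  obtain ⟨h1, h2, h3, h4, h5, h6, h7, h8⟩ := h
  refine ⟨?_, ?_, ?_, ?_, ?_, ?_, ?_, ?_⟩
  · intro t ht; exact h1 _ (by omega)
  · intro t ht; exact h2 _ (by omega)
  · intro t ht; exact h3 _ (by omega)
  · intro t ht; exact h4 _ (by omega)
  · intro t ht
    show F₁.r (V (t + s)) (U (t + 1 + s))
    have e : t + 1 + s = t + s + 1 := by omega
    rw [e]; exact h5 (t + s) (by omega)
  · intro hk
    have hsk : s = k := by omega
    subst hsk
    rcases Nat.eq_zero_or_pos s with rfl | hpos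
    · exact h6 rfl
    · rw [hwR_succ _ _ (by omega)]; exact h8 hpos
  · intro hk
    show F₁.r (hwR p V s) (U (0 + s))
    rcases Nat.eq_zero_or_pos s with rfl | hpos
    · rw [hwR_zero]; exact h7 (by omega)
    · rw [hwR_succ _ _ (by omega)]
      have := h5 (s - 1) (by omega)
      have e : s - 1 + 1 = s := by omega
      rw [e] at this
      show F₁.r (V (s - 1)) (U (0 + s))
      rw [Nat.zero_add]; exact this
  · intro hk
    show F₁.r (V (k - s - 1 + s)) q
    have e : k - s - 1 + s = k - 1 := by omega
    rw [e]; exact h8 (by omega)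

lemma hw_concat {A : Set Ω} {p r q : Ω} {k₁ k₂ U₁ V₁ U₂ V₂}
    (h : IsHW Pl F₁ A p r k₁ U₁ V₁) (h' : IsHW Pl F₁ A r q k₂ U₂ V₂) :
    IsHW Pl F₁ A p q (k₁ + k₂)
      (fun t => if t < k₁ then U₁ t else U₂ (t - k₁))
      (fun t => if t < k₁ then V₁ t else V₂ (t - k₁)) := by
  obtain ⟨h1, h2, h3, h4, h5, h6, h7, h8⟩ := h
  obtain ⟨g1, g2, g3, g4, g5, g6, g7, g8⟩ := h'
  refine ⟨?_, ?_, ?_, ?_, ?_, ?_, ?_, ?_⟩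
  · intro t ht
    show (if t < k₁ then U₁ t else U₂ (t - k₁)) ∈ A
    by_cases hc : t < k₁
    · rw [if_pos hc]; exact h1 t hc
    · rw [if_neg hc]; exact g1 _ (by omega)
  · intro t ht
    show (if t < k₁ then V₁ t else V₂ (t - k₁)) ∈ A
    by_cases hc : t < k₁
    · rw [if_pos hc]; exact h2 t hc
    · rw [if_neg hc]; exact g2 _ (by omega)
  · intro t ht
    show ckcRel Pl (if t < k₁ then U₁ t else U₂ (t - k₁)) (if t < k₁ then V₁ t else V₂ (t - k₁))
    by_cases hc : t < k₁
    · rw [if_pos hc, if_pos hc]; exact h3 t hc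
    · rw [if_neg hc, if_neg hc]; exact g3 _ (by omega)
  · intro t ht
    show ¬ F₁.r (if t < k₁ then U₁ t else U₂ (t - k₁)) (if t < k₁ then V₁ t else V₂ (t - k₁))
    by_cases hc : t < k₁
    · rw [if_pos hc, if_pos hc]; exact h4 t hc
    · rw [if_neg hc, if_neg hc]; exact g4 _ (by omega)
  · intro t ht
    show F₁.r (if t < k₁ then V₁ t else V₂ (t - k₁))
      (if t + 1 < k₁ then U₁ (t + 1) else U₂ (t + 1 - k₁))
    by_cases hc : t + 1 < k₁
    · rw [if_pos hc, if_pos (by omega : t < k₁)]; exact h5 t hc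
    · by_cases hc2 : t < k₁
      · have hk2 : 0 < k₂ := by omega
        have e : t + 1 - k₁ = 0 := by omega
        rw [if_pos hc2, if_neg hc, e]
        have hb : F₁.r (V₁ t) r := by
          have ht' : t = k₁ - 1 := by omega
          rw [ht']; exact h8 (by omega)
        exact ftr hb (g7 hk2)
      · have e : t + 1 - k₁ = (t - k₁) + 1 := by omega
        rw [if_neg hc2, if_neg hc, e]
        exact g5 (t - k₁) (by omega)
  · intro hk
    exact ftr (h6 (by omega)) (g6 (by omega))
  · intro hk
    show F₁.r p (if 0 < k₁ then U₁ 0 else U₂ (0 - k₁))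
    rcases Nat.eq_zero_or_pos k₁ with rfl | hpos
    · rw [if_neg (by omega)]; exact ftr (h6 rfl) (g7 (by omega))
    · rw [if_pos hpos]; exact h7 hpos
  · intro hk
    show F₁.r (if k₁ + k₂ - 1 < k₁ then V₁ (k₁ + k₂ - 1) else V₂ (k₁ + k₂ - 1 - k₁)) q
    rcases Nat.eq_zero_or_pos k₂ with rfl | hpos
    · rw [if_pos (by omega : k₁ + 0 - 1 < k₁)]
      have e : k₁ + 0 - 1 = k₁ - 1 := by omega
      rw [e]
      exact ftr (h8 (by omega)) (g6 rfl)
    · rw [if_neg (by omega : ¬ (k₁ + k₂ - 1 < k₁))]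
      have e : k₁ + k₂ - 1 - k₁ = k₂ - 1 := by omega
      rw [e]
      exact g8 hpos

lemma hw_single {A : Set Ω} {u v : Ω} (hu : u ∈ A) (hv : v ∈ A)
    (hck : ckcRel Pl u v) (hF : ¬ F₁.r u v) :
    IsHW Pl F₁ A u v 1 (fun _ => u) (fun _ => v) := by
  refine ⟨fun t ht => hu, fun t ht => hv, fun t ht => hck, fun t ht => hF,
    fun t ht => by omega, fun h0 => by omega, fun _ => fre u, fun _ => fre v⟩

lemma reach_to_hw {A : Set Ω} {u v : Ω}
    (h : Relation.ReflTransGen (StepIn Pl F₁ A) u v) :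
    ∃ k U V, IsHW Pl F₁ A u v k U V := by
  induction h using Relation.ReflTransGen.head_induction_on with
  | refl =>
    exact ⟨0, fun _ => v, fun _ => v, fun t ht => by omega, fun t ht => by omega,
      fun t ht => by omega, fun t ht => by omega, fun t ht => by omega,
      fun _ => fre v, fun h => by omega, fun h => by omega⟩
  | @head a c hst _ ih =>
    obtain ⟨k, U, V, hw⟩ := ih
    obtain ⟨hu, hw', hor⟩ := hst
    by_cases hF : F₁.r a c
    · exact ⟨k, U, V, hw_transport_left hF hw⟩
    · have hck : ckcRel Pl _ _ := hor.resolve_right hF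
      exact ⟨1 + k, _, _, hw_concat (hw_single hu hw' hck hF) hw⟩

lemma hw_U_block {A : Set Ω} {p q : Ω} {k U V} (h : IsHW Pl F₁ A p q k U V)
    {t : ℕ} (ht : t < k) : F₁.r (hwR p V t) (U t) := by
  obtain ⟨h1, h2, h3, h4, h5, h6, h7, h8⟩ := h
  rcases Nat.eq_zero_or_pos t with rfl | hpos
  · rw [hwR_zero]; exact h7 (by omega)
  · rw [hwR_succ _ _ (by omega : t ≠ 0)]
    have := h5 (t - 1) (by omega)
    rw [show t - 1 + 1 = t by omega] at this
    exact this

lemma hw_min_distinct {A : Set Ω} {p q : Ω} {k U V}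
    (h : IsHW Pl F₁ A p q k U V)
    (hmin : ∀ k', (∃ U' V', IsHW Pl F₁ A p q k' U' V') → k ≤ k')
    {s t : ℕ} (hst : s < t) (htk : t ≤ k) : ¬ F₁.r (hwR p V s) (hwR p V t) := by
  intro hF
  have hpre := hw_prefix h (show s ≤ k by omega)
  have hsuf := hw_transport_left hF (hw_suffix h htk)
  have := hmin (s + (k - t)) ⟨_, _, hw_concat hpre hsuf⟩
  omega

lemma hw_min_labels {A : Set Ω} {p q : Ω} {k U V}
    (h : IsHW Pl F₁ A p q k U V)
    (hmin : ∀ k', (∃ U' V', IsHW Pl F₁ A p q k' U' V') → k ≤ k')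
    {t : ℕ} (ht : t + 1 < k) : ¬ ckcRel Pl (U t) (U (t + 1)) := by
  intro hck
  have h' := h
  obtain ⟨h1, h2, h3, h4, h5, h6, h7, h8⟩ := h'
  have hUb : F₁.r (hwR p V t) (U t) := hw_U_block h (by omega)
  have hnf : ¬ F₁.r (U t) (V (t + 1)) := by
    intro hF
    refine hw_min_distinct h hmin (show t < t + 2 by omega) (show t + 2 ≤ k by omega) ?_
    rw [hwR_succ _ _ (by omega : t + 2 ≠ 0)]
    rw [show t + 2 - 1 = t + 1 by omega]
    exact ftr hUb hF
  have hmid : IsHW Pl F₁ A (hwR p V t) (hwR p V (t + 2)) 1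
      (fun _ => U t) (fun _ => V (t + 1)) := by
    refine ⟨fun _ _ => h1 t (by omega), fun _ _ => h2 (t+1) (by omega),
      fun _ _ => ktr hck (h3 (t+1) (by omega)), fun _ _ => hnf,
      fun _ h1' => by omega, fun h0 => by omega, fun _ => hUb, fun _ => ?_⟩
    rw [hwR_succ _ _ (by omega : t + 2 ≠ 0), show t + 2 - 1 = t + 1 by omega]
    try exact fre _
  have hpre := hw_prefix h (show t ≤ k by omega)
  have hsuf := hw_suffix h (show t + 2 ≤ k by omega)
  have := hmin (t + (1 + (k - (t + 2)))) ⟨_, _, hw_concat hpre (hw_concat hmid hsuf)⟩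
  omega


lemma exists_good_loop
    {A₁ A₂ : Set Ω} (hdisj : Disjoint A₁ A₂)
    (hcl₁ : ∀ u w, u ∈ A₁ → ckcRel Pl u w → w ∈ A₁)
    {a b a' b' : Ω} (hab : F₁.r a b) (hab' : F₁.r a' b')
    (hno : ¬ F₁.r a a')
    (hrw₁ : ∃ k U V, IsHW Pl F₁ A₁ a a' k U V)
    (hrw₂ : ∃ k U V, IsHW Pl F₁ A₂ b b' k U V) :
    ∃ L : Loop Pl F₁, Type2Irreducible F₁ L.x L.y ∧
      (∃ j, L.x j ∈ A₁) ∧ (∃ j, L.x j ∈ A₂) := by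
  classical
  have hex₁ : ∃ k, ∃ U V, IsHW Pl F₁ A₁ a a' k U V := hrw₁
  have hex₂ : ∃ k, ∃ U V, IsHW Pl F₁ A₂ b b' k U V := hrw₂
  set k₁ := Nat.find hex₁ with hk₁def
  set k₂ := Nat.find hex₂ with hk₂def
  obtain ⟨U₁, V₁, hw₁⟩ := Nat.find_spec hex₁
  obtain ⟨U₂, V₂, hw₂⟩ := Nat.find_spec hex₂
  have hmin₁ : ∀ k', (∃ U' V', IsHW Pl F₁ A₁ a a' k' U' V') → k₁ ≤ k' :=
    fun k' h => Nat.find_min' hex₁ h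
  have hmin₂ : ∀ k', (∃ U' V', IsHW Pl F₁ A₂ b b' k' U' V') → k₂ ≤ k' :=
    fun k' h => Nat.find_min' hex₂ h
  have hw₁' := hw₁
  have hw₂' := hw₂
  obtain ⟨w1U, w1V, w1ck, w1nf, w1link, w1nil, w1head, w1last⟩ := hw₁'
  obtain ⟨w2U, w2V, w2ck, w2nf, w2link, w2nil, w2head, w2last⟩ := hw₂'
  set R₁ := hwR a V₁ with hR₁
  set R₂ := hwR b V₂ with hR₂
  have M1₁ : ∀ s t, s < t → t ≤ k₁ → ¬ F₁.r (R₁ s) (R₁ t) :=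
    fun s t h h' => hw_min_distinct hw₁ hmin₁ h h'
  have M1₂ : ∀ s t, s < t → t ≤ k₂ → ¬ F₁.r (R₂ s) (R₂ t) :=
    fun s t h h' => hw_min_distinct hw₂ hmin₂ h h'
  have M2₁ : ∀ t, t + 1 < k₁ → ¬ ckcRel Pl (U₁ t) (U₁ (t + 1)) :=
    fun t h => hw_min_labels hw₁ hmin₁ h
  have M2₂ : ∀ t, t + 1 < k₂ → ¬ ckcRel Pl (U₂ t) (U₂ (t + 1)) :=
    fun t h => hw_min_labels hw₂ hmin₂ h
  have hBk₁ : ∀ t, t < k₁ → F₁.r (R₁ t) (U₁ t) := fun t h => hw_U_block hw₁ h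
  have hBk₂ : ∀ t, t < k₂ → F₁.r (R₂ t) (U₂ t) := fun t h => hw_U_block hw₂ h
  have hk₁pos : 0 < k₁ := by
    rcases Nat.eq_zero_or_pos k₁ with h0 | h; · exact absurd (w1nil h0) hno
    exact h
  have hnobb' : ¬ F₁.r b b' := fun h => hno (ftr hab (ftr h (fsy hab')))
  have hk₂pos : 0 < k₂ := by
    rcases Nat.eq_zero_or_pos k₂ with h0 | h; · exact absurd (w2nil h0) hnobb'
    exact h
  have hR₁0 : R₁ 0 = a := rfl
  have hR₂0 : R₂ 0 = b := rfl
  have hexc : ∃ c, ∃ s t, s ≤ k₁ ∧ t ≤ k₂ ∧ ¬(s = 0 ∧ t = 0) ∧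
      F₁.r (R₁ s) (R₂ t) ∧ s + t = c := by
    refine ⟨k₁ + k₂, k₁, k₂, le_rfl, le_rfl, by omega, ?_, rfl⟩
    have e1 : F₁.r (R₁ k₁) a' := by
      rw [hR₁, hwR_succ _ _ (by omega : k₁ ≠ 0)]; exact w1last hk₁pos
    have e2 : F₁.r (R₂ k₂) b' := by
      rw [hR₂, hwR_succ _ _ (by omega : k₂ ≠ 0)]; exact w2last hk₂pos
    exact ftr e1 (ftr hab' (fsy e2))
  obtain ⟨i, k, hik₁, hik₂, hik0, hikF, hiksum⟩ := Nat.find_spec hexc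
  have hmincross : ∀ s t, s ≤ k₁ → t ≤ k₂ → ¬(s = 0 ∧ t = 0) → s + t < i + k →
      ¬ F₁.r (R₁ s) (R₂ t) := by
    intro s t hs ht h0 hlt hF
    exact Nat.find_min hexc (show s + t < Nat.find hexc by omega)
      ⟨s, t, hs, ht, h0, hF, rfl⟩
  have hipos : 0 < i := by
    rcases Nat.eq_zero_or_pos i with rfl | h; swap; · exact h
    exfalso
    have hk0 : 0 < k := by omega
    refine M1₂ 0 k hk0 hik₂ ?_
    rw [hR₂0]
    exact ftr (fsy hab) (by rw [hR₁0] at hikF; exact hikF)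
  have hkpos : 0 < k := by
    rcases Nat.eq_zero_or_pos k with rfl | h; swap; · exact h
    exfalso
    refine M1₁ 0 i hipos hik₁ ?_
    rw [hR₁0]
    exact ftr hab (by rw [hR₂0] at hikF; exact fsy hikF)
  -- the cyclic sequence
  set m := i + k with hm
  set CU : ℕ → Ω := fun t => if t < i then U₁ t else V₂ (k - 1 - (t - i)) with hCUdef
  set CV : ℕ → Ω := fun t => if t < i then V₁ t else U₂ (k - 1 - (t - i)) with hCVdef
  have hCU1 : ∀ t, t < i → CU t = U₁ t := by intro t ht; simp only [hCUdef]; rw [if_pos ht]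
  have hCV1 : ∀ t, t < i → CV t = V₁ t := by intro t ht; simp only [hCVdef]; rw [if_pos ht]
  have hCU2 : ∀ t, i ≤ t → CU t = V₂ (k - 1 - (t - i)) := by
    intro t ht; simp only [hCUdef]; rw [if_neg (by omega)]
  have hCV2 : ∀ t, i ≤ t → CV t = U₂ (k - 1 - (t - i)) := by
    intro t ht; simp only [hCVdef]; rw [if_neg (by omega)]
  have hmem1 : ∀ t, t < i → CU t ∈ A₁ ∧ CV t ∈ A₁ := by
    intro t ht
    rw [hCU1 t ht, hCV1 t ht]
    exact ⟨w1U t (by omega), w1V t (by omega)⟩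
  have hmem2 : ∀ t, i ≤ t → t < m → CU t ∈ A₂ ∧ CV t ∈ A₂ := by
    intro t ht htm
    rw [hCU2 t ht, hCV2 t ht]
    exact ⟨w2V _ (by omega), w2U _ (by omega)⟩
  have hck : ∀ t, t < m → ckcRel Pl (CU t) (CV t) := by
    intro t htm
    by_cases ht : t < i
    · rw [hCU1 t ht, hCV1 t ht]; exact w1ck t (by omega)
    · rw [hCU2 t (by omega), hCV2 t (by omega)]; exact ksy (w2ck _ (by omega))
  have hnf : ∀ t, t < m → ¬ F₁.r (CU t) (CV t) := by
    intro t htm hF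
    by_cases ht : t < i
    · rw [hCU1 t ht, hCV1 t ht] at hF; exact w1nf t (by omega) hF
    · rw [hCU2 t (by omega), hCV2 t (by omega)] at hF
      exact w2nf _ (by omega) (fsy hF)
  set ρ : ℕ → Ω := fun t => if t < i then R₁ (t + 1) else R₂ (k - 1 - (t - i)) with hρdef
  have hρ1 : ∀ t, t < i → ρ t = R₁ (t + 1) := by
    intro t ht; simp only [hρdef]; rw [if_pos ht]
  have hρ2 : ∀ t, i ≤ t → ρ t = R₂ (k - 1 - (t - i)) := by
    intro t ht; simp only [hρdef]; rw [if_neg (by omega)]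
  have hrep : ∀ t, t < m → F₁.r (CV t) (ρ t) := by
    intro t htm
    by_cases ht : t < i
    · rw [hρ1 t ht, hCV1 t ht, hR₁, hwR_succ _ _ (by omega : t + 1 ≠ 0),
        show t + 1 - 1 = t by omega]
      try exact fre _
    · rw [hρ2 t (by omega), hCV2 t (by omega)]
      exact fsy (hBk₂ _ (by omega))
  have hrepdist : ∀ s t, s < t → t < m → ¬ F₁.r (ρ s) (ρ t) := by
    intro s t hst htm hF
    by_cases hsi : s < i <;> by_cases hti : t < i
    · rw [hρ1 s hsi, hρ1 t hti] at hF
      exact M1₁ (s + 1) (t + 1) (by omega) (by omega) hF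
    · rw [hρ1 s hsi, hρ2 t (by omega)] at hF
      exact hmincross (s + 1) (k - 1 - (t - i)) (by omega) (by omega) (by omega)
        (by omega) hF
    · omega
    · rw [hρ2 s (by omega), hρ2 t (by omega)] at hF
      exact M1₂ (k - 1 - (t - i)) (k - 1 - (s - i)) (by omega) (by omega) (fsy hF)
  have hCVdist : ∀ s t, s < t → t < m → ¬ F₁.r (CV s) (CV t) := by
    intro s t hst htm hF
    exact hrepdist s t hst htm (ftr (fsy (hrep s (by omega))) (ftr hF (hrep t htm)))
  have hCVne : ∀ s t, s ≠ t → s < m → t < m → ¬ F₁.r (CV s) (CV t) := by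
    intro s t hst hs ht hF
    rcases Nat.lt_or_ge s t with h | h
    · exact hCVdist s t h ht hF
    · exact hCVdist t s (by omega) hs (fsy hF)
  have hlink : ∀ t, t < m → F₁.r (CV t) (CU ((t + 1) % m)) := by
    intro t htm
    by_cases hlast : t + 1 = m
    · rw [hlast, Nat.mod_self, hCU1 0 hipos, hCV2 t (by omega),
        show k - 1 - (t - i) = 0 by omega]
      exact ftr (fsy (w2head hk₂pos)) (ftr (fsy hab) (w1head hk₁pos))
    · rw [Nat.mod_eq_of_lt (by omega : t + 1 < m)]
      by_cases hc : t + 1 < i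
      · rw [hCV1 t (by omega), hCU1 (t + 1) hc]
        exact w1link t (by omega)
      · by_cases hc2 : t < i
        · rw [hCV1 t hc2, hCU2 (t + 1) (by omega),
            show k - 1 - (t + 1 - i) = k - 1 by omega]
          have e3 : V₁ t = R₁ i := by
            rw [hR₁, hwR_succ _ _ (by omega : i ≠ 0)]; congr 1; omega
          have e4 : R₂ k = V₂ (k - 1) := by
            rw [hR₂, hwR_succ _ _ (by omega : k ≠ 0)]
          rw [e3, ← e4]
          exact hikF
        · rw [hCV2 t (by omega), hCU2 (t + 1) (by omega),
            show k - 1 - (t - i) = (k - 1 - (t + 1 - i)) + 1 by omega]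
          exact fsy (w2link _ (by omega))
  have hckne : ∀ t, t < m → ¬ ckcRel Pl (CU t) (CU ((t + 1) % m)) := by
    intro t htm hcc
    by_cases hlast : t + 1 = m
    · rw [hlast, Nat.mod_self] at hcc
      have h2 : CU t ∈ A₂ := (hmem2 t (by omega) (by omega)).1
      have h1 : CU 0 ∈ A₁ := (hmem1 0 hipos).1
      exact Set.disjoint_left.mp hdisj (hcl₁ _ _ h1 (ksy hcc)) h2
    · rw [Nat.mod_eq_of_lt (by omega : t + 1 < m)] at hcc
      by_cases hc : t + 1 < i
      · rw [hCU1 t (by omega), hCU1 (t + 1) hc] at hcc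
        exact M2₁ t (by omega) hcc
      · by_cases hc2 : t < i
        · have h1 : CU t ∈ A₁ := (hmem1 t hc2).1
          have h2 : CU (t + 1) ∈ A₂ := (hmem2 (t + 1) (by omega) (by omega)).1
          exact Set.disjoint_left.mp hdisj (hcl₁ _ _ h1 hcc) h2
        · rw [hCU2 t (by omega), hCU2 (t + 1) (by omega),
            show k - 1 - (t - i) = (k - 1 - (t + 1 - i)) + 1 by omega] at hcc
          refine M2₂ (k - 1 - (t + 1 - i)) (by omega) ?_
          exact ktr (w2ck _ (by omega))
            (ktr (ksy hcc) (ksy (w2ck _ (by omega))))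
  -- wrap into a loop on ZMod m
  have hm2 : 2 ≤ m := by omega
  haveI : NeZero m := ⟨by omega⟩
  haveI : Fact (1 < m) := ⟨by omega⟩
  set x : ZMod m → Ω := fun j => CU j.val with hx
  set y : ZMod m → Ω := fun j => CV j.val with hy
  have hvlt : ∀ j : ZMod m, j.val < m := fun j => ZMod.val_lt j
  have hvsucc : ∀ j : ZMod m, (j + 1).val = (j.val + 1) % m := by
    intro j
    conv_lhs => rw [show j + 1 = ((j.val + 1 : ℕ) : ZMod m) by
      rw [Nat.cast_add, Nat.cast_one, ZMod.natCast_zmod_val]]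
    rw [ZMod.val_natCast]
  have hxv : ∀ j : ZMod m, x j = CU j.val := fun j => rfl
  have hyv : ∀ j : ZMod m, y j = CV j.val := fun j => rfl
  have hloop : IsLoop Pl F₁ m x y := by
    refine ⟨hm2, ?_, ?_, ?_, ?_, ?_⟩
    · intro j heq
      rw [hxv, hyv] at heq
      exact hnf j.val (hvlt j) (by rw [heq]; try exact fre _)
    · intro j; rw [hxv, hyv]; exact hck j.val (hvlt j)
    · intro j; rw [hxv, hyv, hvsucc j]; exact hlink j.val (hvlt j)
    · intro j; rw [hxv, hxv, hvsucc j]; exact hckne j.val (hvlt j)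
    · intro j j' hne
      rw [Set.eq_empty_iff_forall_notMem]
      rintro z ⟨hz1, hz2⟩
      have hgen : ∀ (w : Ω) (jj : ZMod m), w ∈ ({y jj, x (jj + 1)} : Set Ω) →
          F₁.r w (CV jj.val) := by
        intro w jj hw
        rcases hw with rfl | hw
        · rw [hyv]; try exact fre _
        · rw [Set.mem_singleton_iff] at hw
          subst hw
          rw [hxv, hvsucc jj]
          exact fsy (hlink jj.val (hvlt jj))
      have h1 := hgen z j hz1
      have h2 := hgen z j' hz2
      have hvne : j.val ≠ j'.val := fun h => hne (ZMod.val_injective m h)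
      exact hCVne j.val j'.val hvne (hvlt j) (hvlt j') (ftr (fsy h1) h2)
  -- type-2 irreducibility
  have hauxN : ∀ r, r < m → ∀ t, t < m → F₁.r (CU r) (CV t) → r = (t + 1) % m := by
    intro r hr t htm hF
    rcases Nat.eq_zero_or_pos r with rfl | hpos
    · have hl := hlink (m - 1) (by omega)
      rw [show (m - 1 + 1) % m = 0 by rw [show m - 1 + 1 = m by omega, Nat.mod_self]] at hl
      have hcv : F₁.r (CV (m - 1)) (CV t) := ftr hl hF
      have ht' : m - 1 = t := by
        by_contra hne'
        exact hCVne (m - 1) t hne' (by omega) htm hcv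
      rw [← ht', show m - 1 + 1 = m by omega, Nat.mod_self]
    · have hl := hlink (r - 1) (by omega)
      rw [show (r - 1 + 1) % m = r by rw [show r - 1 + 1 = r by omega]; exact Nat.mod_eq_of_lt hr] at hl
      have hcv : F₁.r (CV (r - 1)) (CV t) := ftr hl hF
      have ht' : r - 1 = t := by
        by_contra hne'
        exact hCVne (r - 1) t hne' (by omega) htm hcv
      rw [Nat.mod_eq_of_lt (by omega : t + 1 < m)]
      omega
  have hauxV : ∀ r, r < m → ∀ t, t < m → F₁.r (CV r) (CV t) → r = t := by
    intro r hr t htm hF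
    by_contra hne'
    exact hCVne r t hne' hr htm hF
  have htype2 : Type2Irreducible F₁ x y := by
    rintro ⟨c₁, c₂, c₃, c₄, hs1, hs2, hs3, hs4, h12, h13, h14, h23, h24, h34,
      hf12, hf13, hf14⟩
    have hblk : ∀ s, s ∈ loopStates x y → ∃ t, t < m ∧ F₁.r s (CV t) := by
      rintro s (⟨j, rfl⟩ | ⟨j, rfl⟩)
      · rcases Nat.eq_zero_or_pos j.val with h0 | hpos
        · refine ⟨m - 1, by omega, ?_⟩
          have hl := hlink (m - 1) (by omega)
          rw [show (m - 1 + 1) % m = 0 by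
            rw [show m - 1 + 1 = m by omega, Nat.mod_self]] at hl
          rw [hxv, h0]
          exact fsy hl
        · have hjv := hvlt j
          refine ⟨j.val - 1, by omega, ?_⟩
          have hl := hlink (j.val - 1) (by omega)
          rw [show (j.val - 1 + 1) % m = j.val by
            rw [show j.val - 1 + 1 = j.val by omega]; exact Nat.mod_eq_of_lt (hvlt j)] at hl
          rw [hxv]
          exact fsy hl
      · exact ⟨j.val, hvlt j, by rw [hyv]; try exact fre _⟩
    obtain ⟨t₀, ht₀, hc₁⟩ := hblk c₁ hs1
    have hc₂ : F₁.r c₂ (CV t₀) := ftr (fsy hf12) hc₁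
    have hc₃ : F₁.r c₃ (CV t₀) := ftr (fsy hf13) hc₁
    have hmem : ∀ s, s ∈ loopStates x y → F₁.r s (CV t₀) →
        s = CV t₀ ∨ s = CU ((t₀ + 1) % m) := by
      rintro s (⟨j, rfl⟩ | ⟨j, rfl⟩) hF
      · right; rw [hxv] at hF ⊢; rw [hauxN j.val (hvlt j) t₀ ht₀ hF]
      · left; rw [hyv] at hF ⊢; rw [hauxV j.val (hvlt j) t₀ ht₀ hF]
    rcases hmem c₁ hs1 hc₁ with e1 | e1 <;> rcases hmem c₂ hs2 hc₂ with e2 | e2 <;>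
      rcases hmem c₃ hs3 hc₃ with e3 | e3 <;>
      first
        | exact h12 (e1.trans e2.symm)
        | exact h13 (e1.trans e3.symm)
        | exact h23 (e2.trans e3.symm)
  refine ⟨⟨m, x, y, hloop⟩, htype2, ⟨(0 : ZMod m), ?_⟩, ⟨((i : ℕ) : ZMod m), ?_⟩⟩
  · show x 0 ∈ A₁
    rw [hxv, ZMod.val_zero]
    exact (hmem1 0 hipos).1
  · show x ((i : ℕ) : ZMod m) ∈ A₂
    rw [hxv, ZMod.val_natCast, Nat.mod_eq_of_lt (by omega : i < m)]
    exact (hmem2 i le_rfl (by omega)).1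


section Fam
variable {n : ℕ} {Pl : Fin n → Setoid Ω} {F₁ : Setoid Ω}

lemma share_symm {L L' : Loop Pl F₁} (h : ShareCKC L L') : ShareCKC L' L := by
  obtain ⟨j, j', hj⟩ := h; exact ⟨j', j, ksy hj⟩

lemma cluster_closed {𝒜 : Set (Loop Pl F₁)} {u w : Ω}
    (hu : u ∈ clusterOf 𝒜) (h : ckcRel Pl u w) : w ∈ clusterOf 𝒜 := by
  obtain ⟨L, hL, j, hj⟩ := hu; exact ⟨L, hL, j, ktr (ksy h) hj⟩

lemma loop_x_mem {𝒜 : Set (Loop Pl F₁)} {L : Loop Pl F₁} (hL : L ∈ 𝒜) (j : ZMod L.m) :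
    L.x j ∈ clusterOf 𝒜 := ⟨L, hL, j, kre _⟩

lemma loop_y_mem {𝒜 : Set (Loop Pl F₁)} {L : Loop Pl F₁} (hL : L ∈ 𝒜) (j : ZMod L.m) :
    L.y j ∈ clusterOf 𝒜 := ⟨L, hL, j, ksy (L.isLoop.pair_ckc j)⟩

lemma loop_reach {𝒜 : Set (Loop Pl F₁)} {L : Loop Pl F₁} (hL : L ∈ 𝒜) (j j' : ZMod L.m) :
    Relation.ReflTransGen (StepIn Pl F₁ (clusterOf 𝒜)) (L.x j) (L.x j') := by
  haveI : NeZero L.m := ⟨by have := L.isLoop.two_le; omega⟩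
  have step1 : ∀ i : ZMod L.m,
      Relation.ReflTransGen (StepIn Pl F₁ (clusterOf 𝒜)) (L.x i) (L.x (i + 1)) := by
    intro i
    exact Relation.ReflTransGen.head
      ⟨loop_x_mem hL i, loop_y_mem hL i, Or.inl (L.isLoop.pair_ckc i)⟩
      (Relation.ReflTransGen.single
        ⟨loop_y_mem hL i, loop_x_mem hL (i + 1), Or.inr (L.isLoop.link i)⟩)
  have hnat : ∀ c : ℕ,
      Relation.ReflTransGen (StepIn Pl F₁ (clusterOf 𝒜)) (L.x j) (L.x (j + c)) := by
    intro c
    induction c with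
    | zero => simpa using Relation.ReflTransGen.refl
    | succ c ih =>
      have e : (j + ((c + 1 : ℕ) : ZMod L.m)) = (j + c) + 1 := by push_cast; ring
      rw [e]; exact ih.trans (step1 _)
  have h := hnat (j' - j).val
  have e : j + (((j' - j).val : ℕ) : ZMod L.m) = j' := by
    rw [ZMod.natCast_zmod_val]; ring
  rwa [e] at h

lemma family_reach {𝒜 : Set (Loop Pl F₁)} (hconn : IsConnectedFamily 𝒜)
    {L L' : Loop Pl F₁} (hL : L ∈ 𝒜) (hL' : L' ∈ 𝒜) (j : ZMod L.m) (j' : ZMod L'.m) :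
    Relation.ReflTransGen (StepIn Pl F₁ (clusterOf 𝒜)) (L.x j) (L'.x j') := by
  have key : ∀ (N : Loop Pl F₁),
      Relation.ReflTransGen (fun a b => a ∈ 𝒜 ∧ b ∈ 𝒜 ∧ ShareCKC a b) L N →
      ∀ j'' : ZMod N.m,
      Relation.ReflTransGen (StepIn Pl F₁ (clusterOf 𝒜)) (L.x j) (N.x j'') := by
    intro N hch
    induction hch with
    | refl => intro j''; exact loop_reach hL j j''
    | tail hrest hstep ih =>
      intro j''
      obtain ⟨hM, hN, ja, jb, hck⟩ := hstep
      exact (ih ja).trans (Relation.ReflTransGen.head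
        ⟨loop_x_mem hM ja, loop_x_mem hN jb, Or.inl hck⟩ (loop_reach hN jb j''))
  exact key L' (hconn.2 L hL L' hL') j'

lemma cluster_reach {𝒜 : Set (Loop Pl F₁)} (hconn : IsConnectedFamily 𝒜) {u v : Ω}
    (hu : u ∈ clusterOf 𝒜) (hv : v ∈ clusterOf 𝒜) :
    Relation.ReflTransGen (StepIn Pl F₁ (clusterOf 𝒜)) u v := by
  obtain ⟨L, hL, jL, hckL⟩ := hu
  obtain ⟨L', hL', jL', hckL'⟩ := hv
  refine Relation.ReflTransGen.head
    ⟨⟨L, hL, jL, hckL⟩, loop_x_mem hL jL, Or.inl hckL⟩ ?_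
  exact (family_reach hconn hL hL' jL jL').trans
    (Relation.ReflTransGen.single
      ⟨loop_x_mem hL' jL', ⟨L', hL', jL', hckL'⟩, Or.inl (ksy hckL')⟩)

lemma singleton_connected {L : Loop Pl F₁} (h2 : Type2Irreducible F₁ L.x L.y) :
    IsConnectedFamily ({L} : Set (Loop Pl F₁)) := by
  constructor
  · intro M hM; rw [Set.mem_singleton_iff] at hM; subst hM; exact h2
  · intro M hM M' hM'
    rw [Set.mem_singleton_iff] at hM hM'; subst hM; subst hM'
    exact Relation.ReflTransGen.refl

lemma exists_maximal_family {L : Loop Pl F₁} (h2 : Type2Irreducible F₁ L.x L.y) :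
    ∃ 𝒜, IsMaximalConnectedFamily 𝒜 ∧ L ∈ 𝒜 := by
  classical
  have hzorn : ∀ c ⊆ {ℬ : Set (Loop Pl F₁) | IsConnectedFamily ℬ ∧ L ∈ ℬ},
      IsChain (· ⊆ ·) c → c.Nonempty →
      ∃ ub ∈ {ℬ : Set (Loop Pl F₁) | IsConnectedFamily ℬ ∧ L ∈ ℬ}, ∀ s ∈ c, s ⊆ ub := by
    intro c hcS hchain hcne
    obtain ⟨ℬ₀, hB0⟩ := hcne
    refine ⟨⋃₀ c, ⟨⟨?_, ?_⟩, Set.subset_sUnion_of_mem hB0 (hcS hB0).2⟩,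
      fun s hs => Set.subset_sUnion_of_mem hs⟩
    · rintro M ⟨ℬ, hB, hM⟩
      exact (hcS hB).1.1 M hM
    · rintro M ⟨ℬ₁, hB1, hM1⟩ M' ⟨ℬ₂, hB2, hM2⟩
      have hmono : ∀ (𝒟 : Set (Loop Pl F₁)), 𝒟 ∈ c → ∀ {P Q : Loop Pl F₁},
          Relation.ReflTransGen (fun a b => a ∈ 𝒟 ∧ b ∈ 𝒟 ∧ ShareCKC a b) P Q →
          Relation.ReflTransGen (fun a b => a ∈ ⋃₀ c ∧ b ∈ ⋃₀ c ∧ ShareCKC a b) P Q := by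
        intro 𝒟 hD P Q h
        refine Relation.ReflTransGen.mono ?_ P Q h
        intro a b hab; exact ⟨⟨𝒟, hD, hab.1⟩, ⟨𝒟, hD, hab.2.1⟩, hab.2.2⟩
      rcases eq_or_ne ℬ₁ ℬ₂ with rfl | hne
      · exact hmono ℬ₁ hB1 ((hcS hB1).1.2 M hM1 M' hM2)
      · rcases hchain hB1 hB2 hne with hle | hle
        · exact hmono ℬ₂ hB2 ((hcS hB2).1.2 M (hle hM1) M' hM2)
        · exact hmono ℬ₁ hB1 ((hcS hB1).1.2 M hM1 M' (hle hM2))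
  obtain ⟨𝒜, hsub, hmax⟩ := zorn_subset_nonempty
    {ℬ : Set (Loop Pl F₁) | IsConnectedFamily ℬ ∧ L ∈ ℬ} hzorn {L}
    ⟨singleton_connected h2, rfl⟩
  have hL𝒜 : L ∈ 𝒜 := hsub rfl
  refine ⟨𝒜, ⟨⟨L, hL𝒜⟩, hmax.1.1, ?_⟩, hL𝒜⟩
  intro ℬ hconn hAB
  exact (hmax.eq_of_le ⟨hconn, hAB hL𝒜⟩ hAB).symm

lemma maximal_merge {𝒜 ℬ : Set (Loop Pl F₁)} (hA : IsMaximalConnectedFamily 𝒜)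
    (hB : IsMaximalConnectedFamily ℬ) {L M : Loop Pl F₁}
    (hL : L ∈ 𝒜) (hM : M ∈ ℬ) (h : ShareCKC L M) : 𝒜 = ℬ := by
  have hmono : ∀ (𝒟 : Set (Loop Pl F₁)), 𝒟 ⊆ 𝒜 ∪ ℬ → ∀ {P Q : Loop Pl F₁},
      Relation.ReflTransGen (fun a b => a ∈ 𝒟 ∧ b ∈ 𝒟 ∧ ShareCKC a b) P Q →
      Relation.ReflTransGen (fun a b => a ∈ 𝒜 ∪ ℬ ∧ b ∈ 𝒜 ∪ ℬ ∧ ShareCKC a b) P Q := by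
    intro 𝒟 hsub P Q hr
    refine Relation.ReflTransGen.mono ?_ P Q hr
    intro a b hab; exact ⟨hsub hab.1, hsub hab.2.1, hab.2.2⟩
  have hstepLM : Relation.ReflTransGen
      (fun a b => a ∈ 𝒜 ∪ ℬ ∧ b ∈ 𝒜 ∪ ℬ ∧ ShareCKC a b) L M :=
    Relation.ReflTransGen.single ⟨Or.inl hL, Or.inr hM, h⟩
  have hstepML : Relation.ReflTransGen
      (fun a b => a ∈ 𝒜 ∪ ℬ ∧ b ∈ 𝒜 ∪ ℬ ∧ ShareCKC a b) M L :=
    Relation.ReflTransGen.single ⟨Or.inr hM, Or.inl hL, share_symm h⟩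
  have hconn : IsConnectedFamily (𝒜 ∪ ℬ) := by
    constructor
    · rintro N (hN | hN)
      exacts [hA.2.1.1 N hN, hB.2.1.1 N hN]
    · rintro N (hN | hN) N' (hN' | hN')
      · exact hmono 𝒜 Set.subset_union_left (hA.2.1.2 N hN N' hN')
      · exact ((hmono 𝒜 Set.subset_union_left (hA.2.1.2 N hN L hL)).trans hstepLM).trans
          (hmono ℬ Set.subset_union_right (hB.2.1.2 M hM N' hN'))
      · exact ((hmono ℬ Set.subset_union_right (hB.2.1.2 N hN M hM)).trans hstepML).trans
          (hmono 𝒜 Set.subset_union_left (hA.2.1.2 L hL N' hN'))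
      · exact hmono ℬ Set.subset_union_right (hB.2.1.2 N hN N' hN')
  have e1 := hA.2.2 (𝒜 ∪ ℬ) hconn Set.subset_union_left
  have e2 := hB.2.2 (𝒜 ∪ ℬ) hconn Set.subset_union_right
  exact e1.symm.trans e2

lemma isCluster_of_max {𝒜 : Set (Loop Pl F₁)} (h : IsMaximalConnectedFamily 𝒜) :
    IsCluster Pl F₁ (clusterOf 𝒜) := ⟨𝒜, h, rfl⟩

lemma omegaStar_closed {A : Set Ω} (hA : A ∈ OmegaStar Pl F₁) {u w : Ω}
    (hu : u ∈ A) (h : ckcRel Pl u w) : w ∈ A := by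
  rcases hA with ⟨𝒜, h𝒜, rfl⟩ | ⟨⟨ω₀, rfl⟩, _⟩
  · exact cluster_closed hu h
  · exact ktr hu h

lemma omegaStar_reach {A : Set Ω} (hA : A ∈ OmegaStar Pl F₁) {u v : Ω}
    (hu : u ∈ A) (hv : v ∈ A) :
    Relation.ReflTransGen (StepIn Pl F₁ A) u v := by
  rcases hA with ⟨𝒜, h𝒜, rfl⟩ | ⟨⟨ω₀, rfl⟩, _⟩
  · exact cluster_reach h𝒜.2.1 hu hv
  · exact Relation.ReflTransGen.single ⟨hu, hv, Or.inl (ktr (ksy hu) hv)⟩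

lemma omegaStar_disjoint {A B : Set Ω} (hA : A ∈ OmegaStar Pl F₁)
    (hB : B ∈ OmegaStar Pl F₁) (hne : A ≠ B) : Disjoint A B := by
  rw [Set.disjoint_left]
  intro z hzA hzB
  apply hne
  rcases hA with ⟨𝒜, h𝒜, rfl⟩ | ⟨⟨ω₀, rfl⟩, hnc⟩
  · rcases hB with ⟨ℬ, hℬ, rfl⟩ | ⟨⟨ω₁, rfl⟩, hnc⟩
    · obtain ⟨LA, hLA, jA, hjA⟩ := hzA
      obtain ⟨LB, hLB, jB, hjB⟩ := hzB
      rw [maximal_merge h𝒜 hℬ hLA hLB ⟨jA, jB, ktr (ksy hjA) hjB⟩]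
    · exact absurd (fun w hw => cluster_closed hzA (ktr (ksy hzB) hw))
        (hnc _ (isCluster_of_max h𝒜))
  · rcases hB with ⟨ℬ, hℬ, rfl⟩ | ⟨⟨ω₁, rfl⟩, hnc'⟩
    · exact absurd (fun w hw => cluster_closed hzB (ktr (ksy hzA) hw))
        (hnc _ (isCluster_of_max hℬ))
    · exact Set.ext fun w =>
        ⟨fun hw => ktr hzB (ktr (ksy hzA) hw), fun hw => ktr hzA (ktr (ksy hzB) hw)⟩

end Fam


/-- **Observation (the partition `Ω*`).**
Let `Ω*` be the collection of all clusters together with all CKCs not contained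
in any cluster. Then `Ω*` is a partition of `Ω`, and for any two distinct
elements `A₁, A₂` of `Ω*` there is at most one block of `F₁` meeting both `A₁`
and `A₂` (any two blocks of `F₁` each meeting both `A₁` and `A₂` coincide). -/
theorem omegaStar_partition_and_single_connection
    {Ω : Type} [Fintype Ω] [Nonempty Ω] {n : ℕ} (hn : 2 ≤ n)
    (Pl : Fin n → Setoid Ω) (F₁ : Setoid Ω) :
    ((∀ A ∈ OmegaStar Pl F₁, A.Nonempty) ∧
      (∀ A ∈ OmegaStar Pl F₁, ∀ B ∈ OmegaStar Pl F₁, A ≠ B → Disjoint A B) ∧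
      ⋃₀ OmegaStar Pl F₁ = Set.univ) ∧
    ∀ A₁ ∈ OmegaStar Pl F₁, ∀ A₂ ∈ OmegaStar Pl F₁, A₁ ≠ A₂ →
      ∀ ω ω' : Ω,
        ({z | F₁.r ω z} ∩ A₁).Nonempty → ({z | F₁.r ω z} ∩ A₂).Nonempty →
        ({z | F₁.r ω' z} ∩ A₁).Nonempty → ({z | F₁.r ω' z} ∩ A₂).Nonempty →
        F₁.r ω ω' := by
  constructor
  · refine ⟨?_, ?_, ?_⟩
    · rintro A (⟨𝒜, h𝒜, rfl⟩ | ⟨⟨ω₀, rfl⟩, _⟩)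
      · obtain ⟨L, hL⟩ := h𝒜.1
        haveI : NeZero L.m := ⟨by have := L.isLoop.two_le; omega⟩
        exact ⟨L.x 0, loop_x_mem hL 0⟩
      · exact ⟨ω₀, kre ω₀⟩
    · intro A hA B hB hne; exact omegaStar_disjoint hA hB hne
    · apply Set.eq_univ_of_forall
      intro w
      rw [Set.mem_sUnion]
      by_cases hc : ∃ D, IsCluster Pl F₁ D ∧ {ω' | ckcRel Pl w ω'} ⊆ D
      · obtain ⟨D, hD, hsub⟩ := hc
        exact ⟨D, Or.inl hD, hsub (kre w)⟩
      · push_neg at hc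
        exact ⟨{ω' | ckcRel Pl w ω'}, Or.inr ⟨⟨w, rfl⟩, hc⟩, kre w⟩
  · intro A₁ hA₁ A₂ hA₂ hne ω ω' h1 h2 h3 h4
    by_contra hno
    obtain ⟨a, hωa, ha⟩ := h1
    obtain ⟨b, hωb, hb⟩ := h2
    obtain ⟨a', hωa', ha'⟩ := h3
    obtain ⟨b', hωb', hb'⟩ := h4
    have hab : F₁.r a b := ftr (fsy hωa) hωb
    have hab' : F₁.r a' b' := ftr (fsy hωa') hωb'
    have hnoaa' : ¬ F₁.r a a' := fun h => hno (ftr hωa (ftr h (fsy hωa')))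
    have hdisj := omegaStar_disjoint hA₁ hA₂ hne
    obtain ⟨Lstar, htype2, ⟨t₁, ht₁⟩, ⟨t₂, ht₂⟩⟩ :=
      exists_good_loop hdisj (fun u w hu h => omegaStar_closed hA₁ hu h)
        hab hab' hnoaa'
        (reach_to_hw (omegaStar_reach hA₁ ha ha'))
        (reach_to_hw (omegaStar_reach hA₂ hb hb'))
    obtain ⟨𝒜s, h𝒜s, hLs⟩ := exists_maximal_family htype2
    rcases hA₁ with ⟨𝒜₁, h𝒜₁, rfl⟩ | ⟨⟨ω₀, rfl⟩, hnc₁⟩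
    · obtain ⟨L₁, hL₁, j₁, hj₁⟩ := ht₁
      have heq1 : 𝒜s = 𝒜₁ := maximal_merge h𝒜s h𝒜₁ hLs hL₁ ⟨t₁, j₁, hj₁⟩
      rcases hA₂ with ⟨𝒜₂, h𝒜₂, rfl⟩ | ⟨⟨ω₁, rfl⟩, hnc₂⟩
      · obtain ⟨L₂, hL₂, j₂, hj₂⟩ := ht₂
        have heq2 : 𝒜s = 𝒜₂ := maximal_merge h𝒜s h𝒜₂ hLs hL₂ ⟨t₂, j₂, hj₂⟩
        exact hne (by rw [← heq1, heq2])
      · refine hnc₂ (clusterOf 𝒜₁) (isCluster_of_max h𝒜₁) ?_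
        intro w hw
        have hck : ckcRel Pl w (Lstar.x t₂) := ktr (ksy hw) ht₂
        have hmem : Lstar.x t₂ ∈ clusterOf 𝒜₁ := by
          rw [← heq1]; exact loop_x_mem hLs t₂
        exact cluster_closed hmem (ksy hck)
    · refine hnc₁ (clusterOf 𝒜s) (isCluster_of_max h𝒜s) ?_
      intro w hw
      have hck : ckcRel Pl w (Lstar.x t₁) := ktr (ksy hw) ht₁
      exact cluster_closed (loop_x_mem hLs t₁) (ksy hck)

end Aux
end Oracles
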